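/- Let R be a unital associative ring and let a, b, c, d be invertible elements of R. Then: (a) a − b is invertible if and only if a⁻¹ − b⁻¹ is invertible; (b) if a − b is invertible, then a(a−b)⁻¹b = b(a−b)⁻¹a = (b⁻¹ − a⁻¹)⁻¹; (c) if d − c and b − a are invertible, then db⁻¹ − ca⁻¹ is invertible if and only if (d−c)⁻¹c − (b−a)⁻¹a is invertible; (d) if d − c, b − a, a − 1, b − 1, c − 1 and d − 1 are invertible, then (d−1)(b−1)⁻¹ − (c−1)(a−1)⁻¹ is invertible if and only if (d−c)⁻¹(c−1) − (b−a)⁻¹(a−1) is invertible; (e) if d − c, b − a, a − 1, b − 1, c − 1 and d − 1 are invertible, then (d⁻¹−1)(c⁻¹−1)⁻¹ − (b⁻¹−1)(a⁻¹−1)⁻¹ is invertible if and only if (c−1)(d−c)⁻¹d − (a−1)(b−a)⁻¹b is invertible. -/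

import Mathlib

open Matrix

section KontsevichDefs

variable {R : Type*} [Ring R]

/-- `J₂`: the transposed Hadamard inverse, `J₂(M)_{jk} = (M_{kj})⁻¹`
(with `Ring.inverse`, which is the two-sided inverse on units and `0` elsewhere). -/
noncomputable def J2 {m : Type*} (M : Matrix m m R) : Matrix m m R :=
  Matrix.of fun j k => Ring.inverse (M k j)

variable {m : Type*} [Fintype m] [DecidableEq m]

/-- `J = J₂ ∘ J₁`, where `J₁(M) = M⁻¹` is the usual matrix inverse. -/
noncomputable def Jmap (M : Matrix m m R) : Matrix m m R := J2 (Ring.inverse M)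

/-- `J⁻¹ = J₁ ∘ J₂`. -/
noncomputable def JinvMap (M : Matrix m m R) : Matrix m m R := Ring.inverse (J2 M)

/-- `dom(J)`: `M` invertible and all entries of `M⁻¹` invertible. -/
def domJ (M : Matrix m m R) : Prop :=
  IsUnit M ∧ ∀ j k, IsUnit (Ring.inverse M j k)

/-- `dom(J⁻¹)`: all entries of `M` invertible and `J₂(M)` invertible. -/
def domJinv (M : Matrix m m R) : Prop :=
  (∀ j k, IsUnit (M j k)) ∧ IsUnit (J2 M)

/-- `dom(Jⁿ)` defined recursively: `M ∈ dom(Jⁿ⁺¹)` iff `M ∈ dom(J)` and `J(M) ∈ dom(Jⁿ)`. -/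
def domJpow : ℕ → Matrix m m R → Prop
  | 0, _ => True
  | n + 1, M => domJ M ∧ domJpow n (Jmap M)

/-- `A ∼ B`: `B = D₁⁻¹ A D₂` for diagonal matrices `D₁, D₂` with invertible diagonal entries. -/
def simRel (A B : Matrix m m R) : Prop :=
  ∃ d₁ d₂ : m → Rˣ,
    B = Matrix.diagonal (fun i => (((d₁ i)⁻¹ : Rˣ) : R)) * A *
        Matrix.diagonal (fun i => ((d₂ i : Rˣ) : R))

/-- entrywise conjugation `x⁻¹ A x` by an invertible ring element. -/
def conjEntry {m' : Type*} (x : Rˣ) (A : Matrix m' m' R) : Matrix m' m' R :=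
  Matrix.of fun j k => ((x⁻¹ : Rˣ) : R) * A j k * (x : R)

/-- `M̂ₙ(R)`: first row and first column consist entirely of `1`'s. -/
def Mhat {m' : Type*} [Zero m'] (A : Matrix m' m' R) : Prop :=
  ∀ k, A 0 k = 1 ∧ A k 0 = 1

/-- `Λ^L(A)_{jk} = a₁₁ a_{j1}⁻¹ a_{jk} a_{1k}⁻¹`. -/
noncomputable def LamL {m' : Type*} [Zero m'] (A : Matrix m' m' R) : Matrix m' m' R :=
  Matrix.of fun j k => A 0 0 * Ring.inverse (A j 0) * A j k * Ring.inverse (A 0 k)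

/-- `Λ^R(A)_{jk} = a_{j1}⁻¹ a_{jk} a_{1k}⁻¹ a₁₁`. -/
noncomputable def LamR {m' : Type*} [Zero m'] (A : Matrix m' m' R) : Matrix m' m' R :=
  Matrix.of fun j k => Ring.inverse (A j 0) * A j k * Ring.inverse (A 0 k) * A 0 0

/-- `Φ(A) = J₂(Λ^L(A⁻¹))`. -/
noncomputable def Phi [Zero m] (A : Matrix m m R) : Matrix m m R := J2 (LamL (Ring.inverse A))

/-- `dom(Φ)`: `A ∈ M̂ₙ(R)`, all entries of `A` invertible, `A` invertible,
all entries of `A⁻¹` invertible. -/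
def domPhi [Zero m] (A : Matrix m m R) : Prop :=
  Mhat A ∧ (∀ j k, IsUnit (A j k)) ∧ IsUnit A ∧ ∀ j k, IsUnit (Ring.inverse A j k)

/-- `Φ⁻¹(B) = Λ^R(J⁻¹(B)) = Λ^R((J₂ B)⁻¹)`. -/
noncomputable def PhiInv [Zero m] (B : Matrix m m R) : Matrix m m R := LamR (Ring.inverse (J2 B))

/-- `dom(Φ⁻¹)`: `B ∈ M̂ₙ(R)`, all entries of `B` invertible, `J₂(B)` invertible,
all entries of `J₂(B)⁻¹` invertible. -/
def domPhiInv [Zero m] (B : Matrix m m R) : Prop :=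
  Mhat B ∧ (∀ j k, IsUnit (B j k)) ∧ IsUnit (J2 B) ∧ ∀ j k, IsUnit (Ring.inverse (J2 B) j k)

/-- `dom(Φⁿ)` defined recursively. -/
def domPhipow [Zero m] : ℕ → Matrix m m R → Prop
  | 0, _ => True
  | n + 1, A => domPhi A ∧ domPhipow n (Phi A)

/-- `Ψ = J₂ ∘ Φ ∘ J₂`. -/
noncomputable def Psi [Zero m] (A : Matrix m m R) : Matrix m m R := J2 (Phi (J2 A))

/-- `dom(Ψ)`: `A ∈ M̂ₙ(R)`, all entries of `A` invertible, `J₂(A) ∈ dom(Φ)`. -/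
def domPsi [Zero m] (A : Matrix m m R) : Prop :=
  Mhat A ∧ (∀ j k, IsUnit (A j k)) ∧ domPhi (J2 A)

/-- every square submatrix (equinumerous injective choices of rows and columns) is invertible. -/
def allSquareSubInv (M : Matrix (Fin 3) (Fin 3) R) : Prop :=
  ∀ (k : ℕ) (r c : Fin k → Fin 3), Function.Injective r → Function.Injective c →
    IsUnit (M.submatrix r c)

/-- only the `1×1` and `2×2` submatrices are required to be invertible. -/
def sub12Inv (M : Matrix (Fin 3) (Fin 3) R) : Prop :=
  (∀ j k, IsUnit (M j k)) ∧
  ∀ (r c : Fin 2 → Fin 3), Function.Injective r → Function.Injective c →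
    IsUnit (M.submatrix r c)

/-- `S`: all square submatrices of `M` are invertible and `J₂(M)` is invertible. -/
def Sset (R : Type*) [Ring R] : Set (Matrix (Fin 3) (Fin 3) R) :=
  {M | allSquareSubInv M ∧ IsUnit (J2 M)}

/-- `Ŝ = S ∩ M̂₃(R)`. -/
def Shat (R : Type*) [Ring R] : Set (Matrix (Fin 3) (Fin 3) R) :=
  {M | M ∈ Sset R ∧ Mhat M}

end KontsevichDefs

section Aux
variable {R : Type*} [Ring R]

lemma aux_inv_eq {x y : R} (h1 : x * y = 1) (h2 : y * x = 1) : Ring.inverse x = y :=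
  Ring.inverse_unit (⟨x, y, h1, h2⟩ : Rˣ)

lemma aux_sandwich {u v : R} (hu : IsUnit u) (hv : IsUnit v) (x : R) :
    IsUnit (u * x * v) ↔ IsUnit x := by
  constructor
  · intro h
    have hx : x = Ring.inverse u * (u * x * v) * Ring.inverse v := by
      rw [mul_assoc u x v, Ring.inverse_mul_cancel_left _ _ hu,
        Ring.mul_inverse_cancel_right _ _ hv]
    rw [hx]
    exact (hu.ringInverse.mul h).mul hv.ringInverse
  · intro h
    exact (hu.mul h).mul hv

lemma aux_sub_inv {a b : R} (ha : IsUnit a) (hb : IsUnit b) :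
    Ring.inverse a - Ring.inverse b = Ring.inverse a * (b - a) * Ring.inverse b := by
  rw [mul_sub, Ring.inverse_mul_cancel _ ha, sub_mul, one_mul,
    Ring.mul_inverse_cancel_right _ _ hb]

lemma aux_sub_inv' {a b : R} (ha : IsUnit a) (hb : IsUnit b) :
    Ring.inverse a - Ring.inverse b = Ring.inverse b * (b - a) * Ring.inverse a := by
  rw [mul_sub, sub_mul, Ring.inverse_mul_cancel _ hb, one_mul,
    Ring.mul_inverse_cancel_right _ _ ha]

lemma partA {a b : R} (ha : IsUnit a) (hb : IsUnit b) :
    IsUnit (a - b) ↔ IsUnit (Ring.inverse a - Ring.inverse b) := by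
  rw [aux_sub_inv ha hb, aux_sandwich ha.ringInverse hb.ringInverse,
    ← neg_sub a b, IsUnit.neg_iff]

lemma partB_inv {a b : R} (ha : IsUnit a) (hb : IsUnit b) (hab : IsUnit (a - b)) :
    Ring.inverse (Ring.inverse b - Ring.inverse a) = a * Ring.inverse (a - b) * b := by
  apply aux_inv_eq
  · rw [aux_sub_inv hb ha]
    simp only [mul_assoc, Ring.inverse_mul_cancel_left _ _ ha,
      Ring.mul_inverse_cancel_left _ _ hab, Ring.inverse_mul_cancel _ hb]
  · rw [aux_sub_inv hb ha]
    simp only [mul_assoc, Ring.mul_inverse_cancel_left _ _ hb,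
      Ring.inverse_mul_cancel_left _ _ hab, Ring.mul_inverse_cancel _ ha]

lemma partB_inv' {a b : R} (ha : IsUnit a) (hb : IsUnit b) (hab : IsUnit (a - b)) :
    Ring.inverse (Ring.inverse b - Ring.inverse a) = b * Ring.inverse (a - b) * a := by
  apply aux_inv_eq
  · rw [aux_sub_inv' hb ha]
    simp only [mul_assoc, Ring.inverse_mul_cancel_left _ _ hb,
      Ring.mul_inverse_cancel_left _ _ hab, Ring.inverse_mul_cancel _ ha]
  · rw [aux_sub_inv' hb ha]
    simp only [mul_assoc, Ring.mul_inverse_cancel_left _ _ ha,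
      Ring.inverse_mul_cancel_left _ _ hab, Ring.mul_inverse_cancel _ hb]

lemma aux_unit_shiftL {c d : R} (hc : IsUnit c) (hdc : IsUnit (d - c)) :
    IsUnit (Ring.inverse c * d - 1) := by
  have e : Ring.inverse c * d - 1 = Ring.inverse c * (d - c) := by
    rw [mul_sub, Ring.inverse_mul_cancel _ hc]
  rw [e]; exact hc.ringInverse.mul hdc

lemma aux_unit_shiftR {c d : R} (hc : IsUnit c) (hdc : IsUnit (d - c)) :
    IsUnit (d * Ring.inverse c - 1) := by
  have e : d * Ring.inverse c - 1 = (d - c) * Ring.inverse c := by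
    rw [sub_mul, Ring.mul_inverse_cancel _ hc]
  rw [e]; exact hdc.mul hc.ringInverse

lemma aux_shiftL {c d : R} (hc : IsUnit c) (hdc : IsUnit (d - c)) :
    Ring.inverse (Ring.inverse c * d - 1) = Ring.inverse (d - c) * c := by
  have e : Ring.inverse c * d - 1 = Ring.inverse c * (d - c) := by
    rw [mul_sub, Ring.inverse_mul_cancel _ hc]
  rw [e]
  apply aux_inv_eq
  · simp only [mul_assoc, Ring.mul_inverse_cancel_left _ _ hdc, Ring.inverse_mul_cancel _ hc]
  · simp only [mul_assoc, Ring.mul_inverse_cancel_left _ _ hc, Ring.inverse_mul_cancel _ hdc]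

lemma aux_shiftR {c d : R} (hc : IsUnit c) (hdc : IsUnit (d - c)) :
    Ring.inverse (d * Ring.inverse c - 1) = c * Ring.inverse (d - c) := by
  have e : d * Ring.inverse c - 1 = (d - c) * Ring.inverse c := by
    rw [sub_mul, Ring.mul_inverse_cancel _ hc]
  rw [e]
  apply aux_inv_eq
  · simp only [mul_assoc, Ring.inverse_mul_cancel_left _ _ hc, Ring.mul_inverse_cancel _ hdc]
  · simp only [mul_assoc, Ring.inverse_mul_cancel_left _ _ hdc, Ring.mul_inverse_cancel _ hc]

lemma partC {a b c d : R} (ha : IsUnit a) (hb : IsUnit b) (hc : IsUnit c)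
    (hdc : IsUnit (d - c)) (hba : IsUnit (b - a)) :
    IsUnit (d * Ring.inverse b - c * Ring.inverse a) ↔
      IsUnit (Ring.inverse (d - c) * c - Ring.inverse (b - a) * a) := by
  have e1 : d * Ring.inverse b - c * Ring.inverse a
      = c * (Ring.inverse c * d - Ring.inverse a * b) * Ring.inverse b := by
    rw [mul_sub, sub_mul]
    simp only [mul_assoc, Ring.mul_inverse_cancel_left _ _ hc,
      Ring.mul_inverse_cancel_left _ _ hb, Ring.mul_inverse_cancel _ hb]
    rw [mul_one]
  have hx : IsUnit (Ring.inverse c * d - 1) := aux_unit_shiftL hc hdc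
  have hy : IsUnit (Ring.inverse a * b - 1) := aux_unit_shiftL ha hba
  rw [e1, aux_sandwich hc hb.ringInverse,
    ← sub_sub_sub_cancel_right (Ring.inverse c * d) (Ring.inverse a * b) 1,
    partA hx hy, aux_shiftL hc hdc, aux_shiftL ha hba]

lemma partC' {a b c d : R} (ha : IsUnit a) (hb : IsUnit b) (hc : IsUnit c)
    (hdc : IsUnit (d - c)) (hba : IsUnit (b - a)) :
    IsUnit (Ring.inverse b * d - Ring.inverse a * c) ↔
      IsUnit (c * Ring.inverse (d - c) - a * Ring.inverse (b - a)) := by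
  have e1 : Ring.inverse b * d - Ring.inverse a * c
      = Ring.inverse b * (d * Ring.inverse c - b * Ring.inverse a) * c := by
    rw [mul_sub, sub_mul]
    simp only [mul_assoc, Ring.inverse_mul_cancel_left _ _ hc,
      Ring.inverse_mul_cancel_left _ _ hb, Ring.inverse_mul_cancel _ hc]
    rw [mul_one]
  have hx : IsUnit (d * Ring.inverse c - 1) := aux_unit_shiftR hc hdc
  have hy : IsUnit (b * Ring.inverse a - 1) := aux_unit_shiftR ha hba
  rw [e1, aux_sandwich hb.ringInverse hc,
    ← sub_sub_sub_cancel_right (d * Ring.inverse c) (b * Ring.inverse a) 1,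
    partA hx hy, aux_shiftR hc hdc, aux_shiftR ha hba]

lemma partD {a b c d : R} (ha1 : IsUnit (a - 1)) (hb1 : IsUnit (b - 1)) (hc1 : IsUnit (c - 1))
    (hdc : IsUnit (d - c)) (hba : IsUnit (b - a)) :
    IsUnit ((d - 1) * Ring.inverse (b - 1) - (c - 1) * Ring.inverse (a - 1)) ↔
      IsUnit (Ring.inverse (d - c) * (c - 1) - Ring.inverse (b - a) * (a - 1)) := by
  have h1 : IsUnit ((d - 1) - (c - 1)) := by rw [sub_sub_sub_cancel_right]; exact hdc
  have h2 : IsUnit ((b - 1) - (a - 1)) := by rw [sub_sub_sub_cancel_right]; exact hba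
  have := partC ha1 hb1 hc1 h1 h2
  rwa [sub_sub_sub_cancel_right, sub_sub_sub_cancel_right] at this

lemma partD' {a b c d : R} (ha1 : IsUnit (a - 1)) (hb1 : IsUnit (b - 1)) (hc1 : IsUnit (c - 1))
    (hdc : IsUnit (d - c)) (hba : IsUnit (b - a)) :
    IsUnit (Ring.inverse (b - 1) * (d - 1) - Ring.inverse (a - 1) * (c - 1)) ↔
      IsUnit ((c - 1) * Ring.inverse (d - c) - (a - 1) * Ring.inverse (b - a)) := by
  have h1 : IsUnit ((d - 1) - (c - 1)) := by rw [sub_sub_sub_cancel_right]; exact hdc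
  have h2 : IsUnit ((b - 1) - (a - 1)) := by rw [sub_sub_sub_cancel_right]; exact hba
  have := partC' ha1 hb1 hc1 h1 h2
  rwa [sub_sub_sub_cancel_right, sub_sub_sub_cancel_right] at this


lemma aux_inv_neg {x : R} (h : IsUnit x) : Ring.inverse (-x) = -Ring.inverse x :=
  aux_inv_eq (by rw [neg_mul_neg, Ring.mul_inverse_cancel _ h])
    (by rw [neg_mul_neg, Ring.inverse_mul_cancel _ h])

lemma aux_inv_mul {x y : R} (hx : IsUnit x) (hy : IsUnit y) :
    Ring.inverse (Ring.inverse x * y) = Ring.inverse y * x := by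
  apply aux_inv_eq
  · simp only [mul_assoc, Ring.mul_inverse_cancel_left _ _ hy, Ring.inverse_mul_cancel _ hx]
  · simp only [mul_assoc, Ring.mul_inverse_cancel_left _ _ hx, Ring.inverse_mul_cancel _ hy]

lemma aux_inv_sub_one {a : R} (ha : IsUnit a) (ha1 : IsUnit (a - 1)) :
    IsUnit (Ring.inverse a - 1) := by
  have e : Ring.inverse a - 1 = Ring.inverse a * (1 - a) := by
    rw [mul_sub, mul_one, Ring.inverse_mul_cancel _ ha]
  have h1 : IsUnit (1 - a) := by rw [← neg_sub]; exact ha1.neg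
  rw [e]; exact ha.ringInverse.mul h1

lemma aux_e4 {a b : R} (ha : IsUnit a) (hb : IsUnit b) (hba : IsUnit (b - a)) :
    (Ring.inverse a - 1) * Ring.inverse (Ring.inverse b - Ring.inverse a)
      = (a - 1) * Ring.inverse (b - a) * b := by
  have hab : IsUnit (a - b) := by rw [← neg_sub]; exact hba.neg
  rw [partB_inv ha hb hab, show a - b = -(b - a) by rw [neg_sub], aux_inv_neg hba]
  simp only [mul_neg, neg_mul, sub_mul, one_mul, neg_sub, mul_assoc,
    Ring.inverse_mul_cancel_left _ _ ha]


end Aux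

/-- Noncommutative identities for invertible `a, b, c, d ∈ R`:
(a) `a − b` invertible iff `a⁻¹ − b⁻¹` invertible;
(b) if `a − b` invertible, then `a(a−b)⁻¹b = b(a−b)⁻¹a = (b⁻¹ − a⁻¹)⁻¹`;
(c) if `d − c`, `b − a` invertible, then `db⁻¹ − ca⁻¹` invertible iff
    `(d−c)⁻¹c − (b−a)⁻¹a` invertible;
(d) if `d − c`, `b − a`, `a − 1`, `b − 1`, `c − 1`, `d − 1` invertible, then
    `(d−1)(b−1)⁻¹ − (c−1)(a−1)⁻¹` invertible iff `(d−c)⁻¹(c−1) − (b−a)⁻¹(a−1)` invertible;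
(e) under the same hypotheses, `(d⁻¹−1)(c⁻¹−1)⁻¹ − (b⁻¹−1)(a⁻¹−1)⁻¹` invertible iff
    `(c−1)(d−c)⁻¹d − (a−1)(b−a)⁻¹b` invertible. -/
theorem noncommutative_identities {R : Type*} [Ring R] (a b c d : R)
    (ha : IsUnit a) (hb : IsUnit b) (hc : IsUnit c) (hd : IsUnit d) :
    (IsUnit (a - b) ↔ IsUnit (Ring.inverse a - Ring.inverse b)) ∧
    (IsUnit (a - b) →
      a * Ring.inverse (a - b) * b = b * Ring.inverse (a - b) * a ∧
      a * Ring.inverse (a - b) * b = Ring.inverse (Ring.inverse b - Ring.inverse a)) ∧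
    (IsUnit (d - c) → IsUnit (b - a) →
      (IsUnit (d * Ring.inverse b - c * Ring.inverse a) ↔
        IsUnit (Ring.inverse (d - c) * c - Ring.inverse (b - a) * a))) ∧
    (IsUnit (d - c) → IsUnit (b - a) → IsUnit (a - 1) → IsUnit (b - 1) → IsUnit (c - 1) →
      IsUnit (d - 1) →
      (IsUnit ((d - 1) * Ring.inverse (b - 1) - (c - 1) * Ring.inverse (a - 1)) ↔
        IsUnit (Ring.inverse (d - c) * (c - 1) - Ring.inverse (b - a) * (a - 1)))) ∧
    (IsUnit (d - c) → IsUnit (b - a) → IsUnit (a - 1) → IsUnit (b - 1) → IsUnit (c - 1) →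
      IsUnit (d - 1) →
      (IsUnit ((Ring.inverse d - 1) * Ring.inverse (Ring.inverse c - 1) -
          (Ring.inverse b - 1) * Ring.inverse (Ring.inverse a - 1)) ↔
        IsUnit ((c - 1) * Ring.inverse (d - c) * d - (a - 1) * Ring.inverse (b - a) * b))) := by
  refine ⟨partA ha hb, ?_, fun hdc hba => partC ha hb hc hdc hba,
    fun hdc hba ha1 hb1 hc1 hd1 => partD ha1 hb1 hc1 hdc hba, ?_⟩
  · intro hab
    exact ⟨(partB_inv ha hb hab).symm.trans (partB_inv' ha hb hab),
      (partB_inv ha hb hab).symm⟩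
  · intro hdc hba ha1 hb1 hc1 hd1
    have hA1 : IsUnit (Ring.inverse a - 1) := aux_inv_sub_one ha ha1
    have hB1 : IsUnit (Ring.inverse b - 1) := aux_inv_sub_one hb hb1
    have hC1 : IsUnit (Ring.inverse c - 1) := aux_inv_sub_one hc hc1
    have hD1 : IsUnit (Ring.inverse d - 1) := aux_inv_sub_one hd hd1
    have hBA : IsUnit (Ring.inverse b - Ring.inverse a) := (partA hb ha).mp hba
    have hDC : IsUnit (Ring.inverse d - Ring.inverse c) := (partA hd hc).mp hdc
    have e1 : (Ring.inverse d - 1) * Ring.inverse (Ring.inverse c - 1) -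
          (Ring.inverse b - 1) * Ring.inverse (Ring.inverse a - 1)
        = (Ring.inverse b - 1) *
            (Ring.inverse (Ring.inverse b - 1) * (Ring.inverse d - 1) -
              Ring.inverse (Ring.inverse a - 1) * (Ring.inverse c - 1)) *
            Ring.inverse (Ring.inverse c - 1) := by
      conv_rhs => rw [mul_sub, sub_mul, Ring.mul_inverse_cancel_left _ _ hB1,
        ← mul_assoc (Ring.inverse b - 1) (Ring.inverse (Ring.inverse a - 1))
          (Ring.inverse c - 1),
        Ring.mul_inverse_cancel_right _ _ hC1]
    have hX : IsUnit (Ring.inverse (Ring.inverse b - 1) * (Ring.inverse d - 1)) :=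
      hB1.ringInverse.mul hD1
    have hY : IsUnit (Ring.inverse (Ring.inverse a - 1) * (Ring.inverse c - 1)) :=
      hA1.ringInverse.mul hC1
    rw [e1, aux_sandwich hB1 hC1.ringInverse, partA hX hY,
      aux_inv_mul hB1 hD1, aux_inv_mul hA1 hC1,
      partD' hC1 hD1 hA1 hBA hDC,
      aux_e4 ha hb hba, aux_e4 hc hd hdc,
      ← neg_sub ((c - 1) * Ring.inverse (d - c) * d) ((a - 1) * Ring.inverse (b - a) * b),
      IsUnit.neg_iff]
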